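/- arXiv:2203.00052 — 2 statements merged into one kernel-verified Lean document; each statement's English description precedes it below -/
import Mathlib

section
/- For η ∈ (1/√2, 1) and N_S ≥ 0, the condition f₁(η, N_S) ≥ 0 (with f₁ as above) holds if and only if N_S ≤ N̄_S(η), where N̄_S(η) is the unique zero of f₁(η, ·); for η ≤ 1/√2, f₁(η, N_S) < 0 for all N_S > 0. -/
noncomputable def f₁ (η NS : ℝ) : ℝ :=
  ((1-η^2)^2 + η^4) / ((1-η^2) * (1 + 2*NS*η^2*(1-η^2))^2)
    - 1 / (1 - 2*η^2*(Real.sqrt (NS*(1+NS)) - NS))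

lemma aux_sqrt_lt (N : ℝ) (hN : 0 ≤ N) : Real.sqrt (N*(1+N)) < N + 1/2 := by
  rw [Real.sqrt_lt' (by linarith)]
  nlinarith

lemma aux_sqrt_ge (N : ℝ) (hN : 0 ≤ N) : N ≤ Real.sqrt (N*(1+N)) := by
  rw [Real.le_sqrt hN (by nlinarith)]
  nlinarith

lemma aux_mono : StrictMonoOn (fun N : ℝ => Real.sqrt (N*(1+N)) - N) (Set.Ici 0) := by
  intro a ha b hb hab
  simp only [Set.mem_Ici] at ha hb
  have hsa : Real.sqrt (a*(1+a)) < a + 1/2 := aux_sqrt_lt a ha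
  have hs2 : Real.sqrt (a*(1+a))^2 = a*(1+a) := Real.sq_sqrt (by nlinarith)
  have hs0 : 0 ≤ Real.sqrt (a*(1+a)) := Real.sqrt_nonneg _
  have key : Real.sqrt (a*(1+a)) + (b - a) < Real.sqrt (b*(1+b)) := by
    rw [Real.lt_sqrt (by linarith)]
    nlinarith [mul_lt_mul_of_pos_right hsa (show (0:ℝ) < b - a by linarith)]
  simp only
  linarith

lemma E_lb (η N : ℝ) (hη0 : 0 < η) (hη1 : η < 1) (hN : 0 ≤ N) :
    1 - η^2 < 1 - 2*η^2*(Real.sqrt (N*(1+N)) - N) ∧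
      1 - 2*η^2*(Real.sqrt (N*(1+N)) - N) ≤ 1 := by
  have ht0 : 0 < η^2 := by positivity
  have h1 := aux_sqrt_lt N hN
  have h2 := aux_sqrt_ge N hN
  constructor
  · nlinarith [mul_pos ht0 (show (0:ℝ) < 1/2 - (Real.sqrt (N*(1+N)) - N) by linarith)]
  · nlinarith [mul_nonneg ht0.le (show (0:ℝ) ≤ Real.sqrt (N*(1+N)) - N by linarith)]

lemma f1_anti (η : ℝ) (hη0 : 0 < η) (hη1 : η < 1) : StrictAntiOn (f₁ η) (Set.Ici 0) := by
  have ht0 : 0 < η^2 := by positivity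
  have ht1 : η^2 < 1 := by nlinarith
  intro a ha b hb hab
  have ha' : (0:ℝ) ≤ a := ha
  have hb' : (0:ℝ) ≤ b := hb
  unfold f₁
  have hA : (0:ℝ) < (1-η^2)^2 + η^4 := by positivity
  have hbase : ∀ x : ℝ, 0 ≤ x → 0 < 1 + 2*x*η^2*(1-η^2) := by
    intro x hx
    nlinarith [mul_nonneg hx (mul_nonneg ht0.le (show (0:ℝ) ≤ 1-η^2 by linarith))]
  have hDa : 0 < (1-η^2) * (1 + 2*a*η^2*(1-η^2))^2 :=
    mul_pos (by nlinarith) (pow_pos (hbase a ha') 2)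
  have hDab : (1-η^2) * (1 + 2*a*η^2*(1-η^2))^2 < (1-η^2) * (1 + 2*b*η^2*(1-η^2))^2 := by
    have h1 := hbase a ha'
    have h2 := hbase b hb'
    have hT : 0 < η^2*(1-η^2) := mul_pos ht0 (by linarith)
    have hin : 1 + 2*a*η^2*(1-η^2) < 1 + 2*b*η^2*(1-η^2) := by
      nlinarith [mul_lt_mul_of_pos_right hab hT]
    have hsq : (1 + 2*a*η^2*(1-η^2))^2 < (1 + 2*b*η^2*(1-η^2))^2 :=
      pow_lt_pow_left₀ hin h1.le (by norm_num)
    exact mul_lt_mul_of_pos_left hsq (by linarith)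
  have h1 : ((1-η^2)^2 + η^4) / ((1-η^2) * (1 + 2*b*η^2*(1-η^2))^2)
      < ((1-η^2)^2 + η^4) / ((1-η^2) * (1 + 2*a*η^2*(1-η^2))^2) :=
    div_lt_div_of_pos_left hA hDa hDab
  have hEb := (E_lb η b hη0 hη1 hb').1
  have hEab : 1 - 2*η^2*(Real.sqrt (b*(1+b)) - b) < 1 - 2*η^2*(Real.sqrt (a*(1+a)) - a) := by
    have := aux_mono ha hb hab
    simp only at this
    nlinarith
  have h2 : 1 / (1 - 2*η^2*(Real.sqrt (a*(1+a)) - a))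
      < 1 / (1 - 2*η^2*(Real.sqrt (b*(1+b)) - b)) :=
    div_lt_div_of_pos_left one_pos (by linarith) hEab
  linarith

lemma f1_cont (η : ℝ) (hη0 : 0 < η) (hη1 : η < 1) : ContinuousOn (f₁ η) (Set.Ici 0) := by
  have ht0 : 0 < η^2 := by positivity
  have ht1 : η^2 < 1 := by nlinarith
  unfold f₁
  apply ContinuousOn.sub
  · apply ContinuousOn.div continuousOn_const (by fun_prop)
    intro N hN
    have hN' : (0:ℝ) ≤ N := hN
    have : 0 < 1 + 2*N*η^2*(1-η^2) := by
      nlinarith [mul_nonneg hN' (mul_nonneg ht0.le (show (0:ℝ) ≤ 1-η^2 by linarith))]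
    have := mul_pos (show (0:ℝ) < 1-η^2 by nlinarith) (pow_pos this 2)
    exact ne_of_gt this
  · apply ContinuousOn.div continuousOn_const
    · apply ContinuousOn.sub continuousOn_const
      apply ContinuousOn.mul continuousOn_const
      apply ContinuousOn.sub _ continuousOn_id
      exact (Real.continuous_sqrt.comp (by continuity)).continuousOn
    · intro N hN
      have := (E_lb η N hη0 hη1 hN).1
      exact ne_of_gt (by nlinarith)

lemma f1_zero (η : ℝ) : f₁ η 0 = ((1-η^2)^2 + η^4)/(1-η^2) - 1 := by
  unfold f₁
  norm_num

theorem squeezed_vacuum_optimal_region (η : ℝ) (hη0 : 0 < η) (hη1 : η < 1) :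
    (1/Real.sqrt 2 < η →
      ∃ Nbar : ℝ, 0 < Nbar ∧ f₁ η Nbar = 0 ∧
        (∀ N : ℝ, 0 < N ∧ f₁ η N = 0 → N = Nbar) ∧
        ∀ NS : ℝ, 0 ≤ NS → (0 ≤ f₁ η NS ↔ NS ≤ Nbar)) ∧
    (η ≤ 1/Real.sqrt 2 → ∀ NS : ℝ, 0 < NS → f₁ η NS < 0) := by
  have ht0 : 0 < η^2 := by positivity
  have ht1 : η^2 < 1 := by nlinarith
  have hu : 0 < 1 - η^2 := by linarith
  have hs2 : Real.sqrt 2 ^ 2 = 2 := Real.sq_sqrt (by norm_num)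
  have hs2p : 0 < Real.sqrt 2 := Real.sqrt_pos.mpr (by norm_num)
  have hanti := f1_anti η hη0 hη1
  constructor
  · intro hηlb
    -- η² > 1/2
    have hhalf : 1/2 < η^2 := by
      have : 1 < η * Real.sqrt 2 := by
        rw [div_lt_iff₀ hs2p] at hηlb; linarith
      nlinarith
    have hf0 : 0 < f₁ η 0 := by
      rw [f1_zero]
      rw [sub_pos, lt_div_iff₀ hu]
      nlinarith
    -- value at N₀
    set N₀ : ℝ := 1/(η^2*(1-η^2)^2) with hN₀def
    have hN₀pos : 0 < N₀ := by positivity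
    have hfN₀ : f₁ η N₀ < 0 := by
      unfold f₁
      have hinner : 1 + 2*N₀*η^2*(1-η^2) = 1 + 2/(1-η^2) := by
        rw [hN₀def]; field_simp
      have hD : (1-η^2) * (1 + 2*N₀*η^2*(1-η^2))^2 = (1-η^2) + 4 + 4/(1-η^2) := by
        rw [hinner]; field_simp; ring
      have hDgt : (4:ℝ) < (1-η^2) * (1 + 2*N₀*η^2*(1-η^2))^2 := by
        rw [hD]
        have : 0 < 4/(1-η^2) := by positivity
        linarith
      have hfirst : ((1-η^2)^2 + η^4) / ((1-η^2) * (1 + 2*N₀*η^2*(1-η^2))^2) < 1 := by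
        rw [div_lt_one (by linarith)]
        nlinarith
      have hE := E_lb η N₀ hη0 hη1 hN₀pos.le
      have hsecond : 1 ≤ 1 / (1 - 2*η^2*(Real.sqrt (N₀*(1+N₀)) - N₀)) := by
        rw [le_div_iff₀ (by linarith [hE.1])]
        linarith [hE.2]
      linarith
    -- IVT
    obtain ⟨Nbar, hNmem, hNval⟩ :=
      intermediate_value_Ioo' hN₀pos.le ((f1_cont η hη0 hη1).mono
        (Set.Icc_subset_Ici_self)) (show (0:ℝ) ∈ Set.Ioo (f₁ η N₀) (f₁ η 0) from ⟨hfN₀, hf0⟩)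
    obtain ⟨hNbar0, hNbarN₀⟩ := hNmem
    refine ⟨Nbar, hNbar0, hNval, ?_, ?_⟩
    · intro N ⟨hNpos, hNzero⟩
      rcases lt_trichotomy N Nbar with h | h | h
      · exfalso
        have := hanti (le_of_lt hNpos : N ∈ Set.Ici 0) (hNbar0.le : Nbar ∈ Set.Ici 0) h
        rw [hNval, hNzero] at this; exact lt_irrefl 0 this
      · exact h
      · exfalso
        have := hanti (hNbar0.le : Nbar ∈ Set.Ici 0) (le_of_lt hNpos : N ∈ Set.Ici 0) h
        rw [hNval, hNzero] at this; exact lt_irrefl 0 this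
    · intro NS hNS
      constructor
      · intro hf
        by_contra hgt
        push_neg at hgt
        have := hanti (hNbar0.le : Nbar ∈ Set.Ici 0) (hNS : NS ∈ Set.Ici 0) hgt
        rw [hNval] at this; linarith
      · intro hle
        rcases eq_or_lt_of_le hle with h | h
        · rw [h, hNval]
        · have := hanti (hNS : NS ∈ Set.Ici 0) (hNbar0.le : Nbar ∈ Set.Ici 0) h
          rw [hNval] at this; linarith
  · intro hηub NS hNS
    have hhalf : η^2 ≤ 1/2 := by
      have : η * Real.sqrt 2 ≤ 1 := by
        rw [le_div_iff₀ hs2p] at hηub; linarith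
      nlinarith
    have hf0 : f₁ η 0 ≤ 0 := by
      rw [f1_zero]
      rw [sub_nonpos, div_le_one hu]
      nlinarith
    have := hanti (le_refl (0:ℝ) : (0:ℝ) ∈ Set.Ici 0) (hNS.le : NS ∈ Set.Ici 0) hNS
    linarith
end

section
/- Let a ≥ 1/2, b ≥ 1/2 with a ≠ b, and suppose c₊² = (1/(8ab))[a²(a²+3b²-1) + b²(b²+3a²-1) ± (a²-b²)√(((a+b)²-1)((a-b)²-1))] is real, which requires (a+b)² ≥ 1 and (a-b)² ≥ 1 (i.e. |a-b| ≥ 1). Then ab < c₊², so the corresponding covariance matrix is not positive semidefinite; hence no pure physical two-mode Gaussian state in the canonical form exists with a ≠ b. -/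
theorem no_pure_state_with_a_ne_b (a b cp ε : ℝ)
    (ha : 1/2 ≤ a) (hb : 1/2 ≤ b) (hab : a ≠ b)
    (hε : ε = 1 ∨ ε = -1)
    (hsum : 1 ≤ (a+b)^2) (hdiff : 1 ≤ (a-b)^2)
    (hcp : cp^2 = (1/(8*a*b)) *
      (a^2*(a^2 + 3*b^2 - 1) + b^2*(b^2 + 3*a^2 - 1)
        + ε*(a^2 - b^2)*Real.sqrt (((a+b)^2 - 1)*((a-b)^2 - 1)))) :
    a*b < cp^2 := by
  set S := Real.sqrt (((a+b)^2 - 1)*((a-b)^2 - 1)) with hSdef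
  have hS0 : 0 ≤ S := Real.sqrt_nonneg _
  have hprod : 0 ≤ ((a+b)^2 - 1)*((a-b)^2 - 1) :=
    mul_nonneg (by linarith) (by linarith)
  have hS2 : S^2 = ((a+b)^2 - 1)*((a-b)^2 - 1) := Real.sq_sqrt hprod
  have hapos : 0 < a := by linarith
  have hbpos : 0 < b := by linarith
  have habpos : 0 < a*b := mul_pos hapos hbpos
  have hDT : (a^2+b^2) < (a^2-b^2)^2 := by
    nlinarith [mul_nonneg (sub_nonneg.mpr hdiff) (sq_nonneg (a+b)), habpos]
  have hkey : ((a^2-b^2)*S)^2 < ((a^2-b^2)^2 - (a^2+b^2))^2 := by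
    have : ((a^2-b^2)*S)^2 = (a^2-b^2)^2 * (((a+b)^2 - 1)*((a-b)^2 - 1)) := by
      rw [mul_pow, hS2]
    nlinarith [habpos, sq_nonneg (a*b)]
  have habs : |(a^2-b^2)*S| < (a^2-b^2)^2 - (a^2+b^2) :=
    abs_lt_of_sq_lt_sq hkey (by linarith)
  obtain ⟨h1, h2⟩ := abs_lt.mp habs
  have hx : (a^2+b^2) - (a^2-b^2)^2 < ε*(a^2-b^2)*S := by
    rcases hε with h | h <;> subst h <;> linarith [h1, h2]
  have h8 : (0:ℝ) < 8*a*b := by linarith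
  rw [hcp, one_div, inv_mul_eq_div, lt_div_iff₀ h8]
  nlinarith [hx]
end
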